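/- arXiv:1005.4627 — 3 statements merged into one kernel-verified Lean document; each statement's English description precedes it below -/
import Mathlib

section
/- Let a, b, c, d be real numbers with (a,b) ≠ (0,0) and (c,d) ≠ (0,0). If there exists an affine map M(x) = αx + β with α > 0 such that M ∘ C_{a,b} = C_{c,d} ∘ M on ℝ, where C_{a,b}(x) = a·sin(x) + b·cos(x), then (a,b) = (c,d) and M is the identity. -/
/-- Differentiating a trig identity. -/
lemma trig_deriv_eq (p q r s e e' α β : ℝ)
    (h : ∀ x : ℝ, p * Real.sin x + q * Real.cos x + e
        = r * Real.sin (α * x + β) + s * Real.cos (α * x + β) + e') :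
    ∀ x : ℝ, p * Real.cos x - q * Real.sin x
        = α * (r * Real.cos (α * x + β) - s * Real.sin (α * x + β)) := by
  intro x
  have hL : HasDerivAt (fun x => p * Real.sin x + q * Real.cos x + e)
      (p * Real.cos x - q * Real.sin x) x := by
    have := (((Real.hasDerivAt_sin x).const_mul p).add
      ((Real.hasDerivAt_cos x).const_mul q)).add_const e
    exact this.congr_deriv (by ring)
  have hin : HasDerivAt (fun x : ℝ => α * x + β) α x := by
    simpa using ((hasDerivAt_id x).const_mul α).add_const β
  have hR : HasDerivAt (fun x => r * Real.sin (α * x + β) + s * Real.cos (α * x + β) + e')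
      (α * (r * Real.cos (α * x + β) - s * Real.sin (α * x + β))) x := by
    have h1 := ((Real.hasDerivAt_sin (α * x + β)).comp x hin).const_mul r
    have h2 := ((Real.hasDerivAt_cos (α * x + β)).comp x hin).const_mul s
    have := (h1.add h2).add_const e'
    exact this.congr_deriv (by ring)
  have hd : deriv (fun x => p * Real.sin x + q * Real.cos x + e) x
      = deriv (fun x => r * Real.sin (α * x + β) + s * Real.cos (α * x + β) + e') x := by
    rw [funext h]
  rw [hL.deriv, hR.deriv] at hd
  exact hd

/-- If an affine map `M x = α x + β` (with `α > 0`) conjugates the cosine map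
`C_{a,b} x = a sin x + b cos x` to `C_{c,d}` on `ℝ`, then `(a,b) = (c,d)` and `M = id`. -/
theorem cosine_maps_affinely_rigid (a b c d α β : ℝ)
    (hab : (a, b) ≠ (0, 0)) (hcd : (c, d) ≠ (0, 0)) (hα : 0 < α)
    (hconj : ∀ x : ℝ, α * (a * Real.sin x + b * Real.cos x) + β
        = c * Real.sin (α * x + β) + d * Real.cos (α * x + β)) :
    (a, b) = (c, d) ∧ α = 1 ∧ β = 0 := by
  have hα0 : α ≠ 0 := ne_of_gt hα
  -- first derivative
  have h1 : ∀ x : ℝ, (α * a) * Real.cos x - (α * b) * Real.sin x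
      = α * (c * Real.cos (α * x + β) - d * Real.sin (α * x + β)) := by
    apply trig_deriv_eq (e := β) (e' := 0)
    intro x
    have := hconj x
    linarith [hconj x]
  -- second derivative
  have h2 : ∀ x : ℝ, (-(α * b)) * Real.cos x - (α * a) * Real.sin x
      = α * ((-(α * d)) * Real.cos (α * x + β) - (α * c) * Real.sin (α * x + β)) := by
    apply trig_deriv_eq (e := 0) (e' := 0)
    intro x
    have := h1 x
    ring_nf
    ring_nf at this
    linarith
  -- key identity: α f(x) = α² (α f(x) + β)
  have key : ∀ x : ℝ, α * (a * Real.sin x + b * Real.cos x)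
      = α ^ 2 * (α * (a * Real.sin x + b * Real.cos x) + β) := by
    intro x
    have h := h2 x
    have hc := hconj x
    nlinarith [h, hc]
  have k0 := key 0
  have kpi := key Real.pi
  have kh := key (Real.pi / 2)
  have kmh := key (-(Real.pi / 2))
  simp [Real.sin_pi_div_two, Real.cos_pi_div_two] at k0 kpi kh kmh
  -- β = 0
  have hα2β : α ^ 2 * β = 0 := by linarith [k0, kpi]
  have hβ : β = 0 := by
    rcases mul_eq_zero.1 hα2β with h' | h'
    · exact absurd (pow_eq_zero_iff (n := 2) (by norm_num) |>.1 h') hα0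
    · exact h'
  subst hβ
  -- α = 1
  have hab' : a ≠ 0 ∨ b ≠ 0 := by
    by_contra h
    push_neg at h
    exact hab (by simp [h.1, h.2])
  have hα2 : α ^ 2 = 1 := by
    rcases hab' with ha | hb
    · have : α * a = α ^ 2 * (α * a) := by linarith [kh]
      have : α * a * (1 - α ^ 2) = 0 := by ring_nf; linarith
      rcases mul_eq_zero.1 this with h' | h'
      · exact absurd (mul_eq_zero.1 h') (by simp [hα0, ha])
      · linarith
    · have : α * b * (1 - α ^ 2) = 0 := by ring_nf; nlinarith [k0]
      rcases mul_eq_zero.1 this with h' | h'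
      · exact absurd (mul_eq_zero.1 h') (by simp [hα0, hb])
      · linarith
  have hα1 : α = 1 := by nlinarith
  subst hα1
  -- now a = c, b = d
  have e0 := hconj 0
  have eh := hconj (Real.pi / 2)
  simp at e0 eh
  exact ⟨by simp [e0, eh], rfl, rfl⟩
end

section
/- Let a, c ∈ ℝ \ {0} and b, d ∈ ℝ. If there exists an affine map M(x) = αx + β with α > 0 such that M ∘ S_{a,b} = S_{c,d} ∘ M on ℝ, where S_{a,b}(x) = a·x·eˣ + b, then (a,b) = (c,d) and M is the identity. -/
open Filter Real

lemma tendsto_mul_exp_atBot' : Tendsto (fun x : ℝ => x * Real.exp x) atBot (nhds 0) := by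
  have h := (Real.tendsto_pow_mul_exp_neg_atTop_nhds_zero 1).comp tendsto_neg_atBot_atTop
  have h2 := h.neg
  simp only [Function.comp, pow_one, neg_neg, neg_zero] at h2
  convert h2 using 2 with x
  ring

/-- If an affine map `M x = α x + β` (with `α > 0`) conjugates `S_{a,b} x = a x eˣ + b`
to `S_{c,d}` on `ℝ`, then `(a,b) = (c,d)` and `M = id`. -/
theorem standard_maps_affinely_rigid (a b c d α β : ℝ)
    (ha : a ≠ 0) (hc : c ≠ 0) (hα : 0 < α)
    (hconj : ∀ x : ℝ, α * (a * x * Real.exp x + b) + β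
        = c * (α * x + β) * Real.exp (α * x + β) + d) :
    (a, b) = (c, d) ∧ α = 1 ∧ β = 0 := by
  -- Step 1: αb + β = d via limits at -∞
  have hlin : Tendsto (fun x : ℝ => α * x + β) atBot atBot := by
    apply Tendsto.atBot_add _ tendsto_const_nhds
    exact (tendsto_const_mul_atBot_of_pos hα).mpr tendsto_id
  have hL : Tendsto (fun x : ℝ => α * (a * x * Real.exp x + b) + β) atBot
      (nhds (α * b + β)) := by
    have : Tendsto (fun x : ℝ => a * (x * Real.exp x)) atBot (nhds (a * 0)) :=
      tendsto_mul_exp_atBot'.const_mul a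
    rw [mul_zero] at this
    have := ((this.add_const b).const_mul α).add_const β
    simpa [mul_assoc] using this
  have hR : Tendsto (fun x : ℝ => c * (α * x + β) * Real.exp (α * x + β) + d) atBot
      (nhds d) := by
    have h2 : Tendsto (fun x : ℝ => (α * x + β) * Real.exp (α * x + β)) atBot (nhds 0) :=
      tendsto_mul_exp_atBot'.comp hlin
    have := (h2.const_mul c).add_const d
    simpa [mul_assoc] using this
  have hbd : α * b + β = d := by
    have heq : (fun x : ℝ => α * (a * x * Real.exp x + b) + β)
        = fun x : ℝ => c * (α * x + β) * Real.exp (α * x + β) + d := funext hconj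
    rw [heq] at hL
    exact tendsto_nhds_unique hL hR
  -- Step 2: the pure equation
  have hkey : ∀ x : ℝ, α * a * x * Real.exp x = c * (α * x + β) * Real.exp (α * x + β) := by
    intro x
    have := hconj x
    rw [← hbd] at this
    linarith [this]
  -- Step 3: β = 0
  have hβ : β = 0 := by
    have h0 := hkey (-β / α)
    have hx : α * (-β / α) + β = 0 := by field_simp; ring
    rw [hx] at h0
    have h0' : α * a * (-β / α) * Real.exp (-β / α) = 0 := by simpa using h0
    have h1 : α * a * (-β / α) = 0 := by
      rcases mul_eq_zero.mp h0' with h | h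
      · exact h
      · exact absurd h (Real.exp_ne_zero _)
    have h2 : α * a * (-β / α) = -(a * β) := by field_simp
    have h3 : a * β = 0 := by linarith [h2 ▸ h1]
    rcases mul_eq_zero.mp h3 with h | h
    · exact absurd h ha
    · exact h
  subst hβ
  -- Step 4: evaluate at 1 and -1
  have h1 := hkey 1
  have hm1 := hkey (-1)
  simp only [add_zero, mul_one, mul_neg_one] at h1 hm1
  have e1 : a * Real.exp 1 = c * Real.exp α := by
    apply mul_left_cancel₀ hα.ne'
    linear_combination h1
  have e2 : a * Real.exp (-1) = c * Real.exp (-α) := by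
    apply mul_left_cancel₀ hα.ne'
    linear_combination -hm1
  have hEα : Real.exp α * Real.exp (-α) = 1 := by rw [← Real.exp_add]; simp
  have p1 : a * (Real.exp 1 * Real.exp (-α)) = c := by
    linear_combination Real.exp (-α) * e1 + c * hEα
  have p2 : a * (Real.exp (-1) * Real.exp α) = c := by
    linear_combination Real.exp α * e2 + c * hEα
  have hEeq : Real.exp 1 * Real.exp (-α) = Real.exp (-1) * Real.exp α :=
    mul_left_cancel₀ ha (p1.trans p2.symm)
  rw [← Real.exp_add, ← Real.exp_add] at hEeq
  have hα1 : α = 1 := by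
    have := Real.exp_injective hEeq
    linarith
  subst hα1
  have hE1 : Real.exp 1 * Real.exp (-1) = 1 := by rw [← Real.exp_add]; simp
  have hac : a = c := by linear_combination p1 - a * hE1
  have hbd' : b = d := by linarith
  exact ⟨by rw [hac, hbd'], rfl, rfl⟩
end

section
/- Let Q be a real polynomial with deg Q ≥ 1 and positive leading coefficient, and let P ≢ 0 be a real polynomial. Then for every M > 0 there exist θ > 0 and x₀ > 0 such that |P(x+iy)·e^{Q(x+iy)}| > M whenever x ≥ x₀ and |y| ≤ θx. -/
open Polynomial Filter Finset Asymptotics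

lemma norm_pow_sub_pow_le' (z w : ℂ) (r : ℝ) (k : ℕ) (hr : 0 ≤ r)
    (hz : ‖z‖ ≤ r) (hw : ‖w‖ ≤ r) :
    ‖z ^ k - w ^ k‖ ≤ (k : ℝ) * r ^ (k - 1) * ‖z - w‖ := by
  rw [← geom_sum₂_mul z w k, norm_mul]
  have hgs : ‖∑ i ∈ Finset.range k, z ^ i * w ^ (k - 1 - i)‖ ≤ (k : ℝ) * r ^ (k - 1) := by
    calc ‖∑ i ∈ Finset.range k, z ^ i * w ^ (k - 1 - i)‖
        ≤ ∑ i ∈ Finset.range k, ‖z ^ i * w ^ (k - 1 - i)‖ := norm_sum_le _ _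
      _ ≤ ∑ _i ∈ Finset.range k, r ^ (k - 1) := by
          apply Finset.sum_le_sum
          intro i hi
          rw [norm_mul, norm_pow, norm_pow]
          calc ‖z‖ ^ i * ‖w‖ ^ (k - 1 - i) ≤ r ^ i * r ^ (k - 1 - i) := by
                gcongr <;> positivity
            _ = r ^ (k - 1) := by
                rw [← pow_add]
                congr 1
                have := Finset.mem_range.mp hi
                omega
      _ = (k : ℝ) * r ^ (k - 1) := by simp [mul_comm]
  exact mul_le_mul_of_nonneg_right hgs (norm_nonneg _)

/-- Sector condition for `P · e^Q` with `Q` a real polynomial of degree `≥ 1` with positive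
leading coefficient and `P ≢ 0` real: for every `M > 0` there are `θ > 0` and `x₀ > 0` with
`|P(x+iy) e^{Q(x+iy)}| > M` whenever `x ≥ x₀` and `|y| ≤ θ x`. -/
theorem sector_condition_of_P_exp_Q (P Q : Polynomial ℝ)
    (hP : P ≠ 0) (hQdeg : 1 ≤ Q.natDegree) (hQlead : 0 < Q.leadingCoeff) :
    ∀ M : ℝ, 0 < M → ∃ θ : ℝ, 0 < θ ∧ ∃ x₀ : ℝ, 0 < x₀ ∧
      ∀ x y : ℝ, x₀ ≤ x → |y| ≤ θ * x →
        M < ‖(P.map (algebraMap ℝ ℂ)).eval (x + y * Complex.I)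
            * Complex.exp ((Q.map (algebraMap ℝ ℂ)).eval (x + y * Complex.I))‖ := by
  intro M hM
  set d := Q.natDegree with hd
  set a := Q.leadingCoeff with ha
  set C : ℝ := ∑ k ∈ Finset.range (d + 1), |Q.coeff k| * ((k : ℝ) * 2 ^ (k - 1)) with hC
  have hC0 : 0 ≤ C := Finset.sum_nonneg fun k _ => by positivity
  set θ : ℝ := min 1 (a / (4 * (C + 1))) with hθ
  have hθpos : 0 < θ := lt_min one_pos (by positivity)
  have hθ1 : θ ≤ 1 := min_le_left _ _
  have hθC : θ * C ≤ a / 4 := by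
    have h1 : θ ≤ a / (4 * (C + 1)) := min_le_right _ _
    calc θ * C ≤ a / (4 * (C + 1)) * C := by gcongr
      _ ≤ a / 4 := by
          rw [div_mul_eq_mul_div, div_le_div_iff₀ (by positivity) (by norm_num)]
          nlinarith
  -- key estimate on Re Q(z)
  have key : ∀ x y : ℝ, 1 ≤ x → |y| ≤ θ * x →
      Q.eval x - θ * C * x ^ d ≤
        ((Q.map (algebraMap ℝ ℂ)).eval ((x : ℂ) + y * Complex.I)).re := by
    intro x y hx hy
    have hx0 : (0 : ℝ) < x := lt_of_lt_of_le one_pos hx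
    set z : ℂ := (x : ℂ) + y * Complex.I with hzdef
    have hzre : ((Q.map (algebraMap ℝ ℂ)).eval z).re
        = ∑ k ∈ Finset.range (d + 1), Q.coeff k * ((z ^ k).re) := by
      rw [Polynomial.eval_map, Polynomial.eval₂_eq_sum_range, Complex.re_sum]
      refine Finset.sum_congr rfl fun k _ => ?_
      simp [Complex.mul_re]
    have hxQ : Q.eval x = ∑ k ∈ Finset.range (d + 1), Q.coeff k * x ^ k :=
      Polynomial.eval_eq_sum_range _
    have hsum : θ * C * x ^ d
        = ∑ k ∈ Finset.range (d + 1), θ * (|Q.coeff k| * ((k : ℝ) * 2 ^ (k - 1)) * x ^ d) := by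
      rw [hC, Finset.mul_sum, Finset.sum_mul]
      exact Finset.sum_congr rfl fun k _ => by ring
    rw [hzre, hxQ, hsum, ← Finset.sum_sub_distrib]
    apply Finset.sum_le_sum
    intro k hk
    have hkd : k ≤ d := by have := Finset.mem_range.mp hk; omega
    -- bound ‖z^k - x^k‖
    have hzx : ‖z - (x : ℂ)‖ = |y| := by
      simp [hzdef, abs_mul]
    have hznorm : ‖z‖ ≤ 2 * x := by
      calc ‖z‖ ≤ ‖(x : ℂ)‖ + ‖(y : ℂ) * Complex.I‖ := norm_add_le _ _
        _ = |x| + |y| := by simp [abs_mul]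
        _ ≤ x + θ * x := by rw [abs_of_pos hx0]; linarith
        _ ≤ 2 * x := by nlinarith
    have hxnorm : ‖(x : ℂ)‖ ≤ 2 * x := by
      rw [Complex.norm_real, Real.norm_eq_abs, abs_of_pos hx0]; linarith
    have hpow : ‖z ^ k - (x : ℂ) ^ k‖ ≤ (k : ℝ) * (2 * x) ^ (k - 1) * |y| := by
      rw [← hzx]
      exact norm_pow_sub_pow_le' z x (2 * x) k (by positivity) hznorm hxnorm
    -- per-term estimate
    have hre : ((x : ℂ) ^ k).re = x ^ k := by
      rw [← Complex.ofReal_pow]; exact Complex.ofReal_re _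
    have habs : |(z ^ k).re - x ^ k| ≤ (k : ℝ) * 2 ^ (k - 1) * (θ * x ^ d) := by
      have h1 : |(z ^ k - (x : ℂ) ^ k).re| ≤ ‖z ^ k - (x : ℂ) ^ k‖ :=
        Complex.abs_re_le_norm _
      rw [Complex.sub_re, hre] at h1
      calc |(z ^ k).re - x ^ k| ≤ ‖z ^ k - (x : ℂ) ^ k‖ := h1
        _ ≤ (k : ℝ) * (2 * x) ^ (k - 1) * |y| := hpow
        _ ≤ (k : ℝ) * 2 ^ (k - 1) * (θ * x ^ d) := by
            calc (k : ℝ) * (2 * x) ^ (k - 1) * |y|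
                ≤ (k : ℝ) * (2 ^ (k - 1) * x ^ (k - 1)) * (θ * x) := by
                  rw [mul_pow]; gcongr
              _ = (k : ℝ) * 2 ^ (k - 1) * (θ * x ^ (k - 1 + 1)) := by ring
              _ ≤ (k : ℝ) * 2 ^ (k - 1) * (θ * x ^ d) := by
                  gcongr
                  · omega
    -- goal: Q.coeff k * x ^ k - θ * (|Q.coeff k| * (k * 2 ^ (k-1)) * x ^ d) ≤ Q.coeff k * (z ^ k).re
    have h2 : Q.coeff k * (z ^ k).re
        = Q.coeff k * x ^ k + Q.coeff k * ((z ^ k).re - x ^ k) := by ring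
    rw [h2]
    have h3 : -(|Q.coeff k| * ((k : ℝ) * 2 ^ (k - 1) * (θ * x ^ d)))
        ≤ Q.coeff k * ((z ^ k).re - x ^ k) := by
      have := neg_abs_le (Q.coeff k * ((z ^ k).re - x ^ k))
      have h4 : |Q.coeff k * ((z ^ k).re - x ^ k)|
          ≤ |Q.coeff k| * ((k : ℝ) * 2 ^ (k - 1) * (θ * x ^ d)) := by
        rw [abs_mul]; gcongr
      linarith
    have : θ * (|Q.coeff k| * ((k : ℝ) * 2 ^ (k - 1)) * x ^ d)
        = |Q.coeff k| * ((k : ℝ) * 2 ^ (k - 1) * (θ * x ^ d)) := by ring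
    linarith
  -- eventual lower bound Q.eval x ≥ (a/2) x^d
  have hequiv := Polynomial.isEquivalent_atTop_lead Q
  have hlo : ∀ᶠ x : ℝ in atTop, a / 2 * x ^ d ≤ Q.eval x := by
    have h1 := (hequiv.isLittleO.def one_half_pos).and (eventually_ge_atTop (0 : ℝ))
    filter_upwards [h1] with x hx
    obtain ⟨h2, hx0⟩ := hx
    simp only [Pi.sub_apply, Real.norm_eq_abs] at h2
    have hg : |a * x ^ d| = a * x ^ d := abs_of_nonneg (by positivity)
    have := abs_sub_abs_le_abs_sub (Q.eval x) (a * x ^ d)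
    have h3 := neg_abs_le (Q.eval x - a * x ^ d)
    rw [hg] at h2
    linarith
  -- lower bound for |P|
  obtain ⟨c, hc, R, hR⟩ : ∃ c : ℝ, 0 < c ∧ ∃ R : ℝ, ∀ z : ℂ, R ≤ ‖z‖ →
      c ≤ ‖(P.map (algebraMap ℝ ℂ)).eval z‖ := by
    rcases Nat.eq_zero_or_pos P.natDegree with h0 | hpos
    · refine ⟨|P.coeff 0|, ?_, 0, fun z _ => ?_⟩
      · rw [abs_pos]
        intro hc0
        exact hP (by rw [Polynomial.eq_C_of_natDegree_eq_zero h0, hc0, map_zero])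
      · rw [Polynomial.eq_C_of_natDegree_eq_zero h0]
        simp
    · have hdeg : 0 < (P.map (algebraMap ℝ ℂ)).degree := by
        rw [Polynomial.degree_map_eq_of_injective (algebraMap ℝ ℂ).injective]
        exact Polynomial.natDegree_pos_iff_degree_pos.mp hpos
      have ht : Tendsto (fun z : ℂ => ‖(P.map (algebraMap ℝ ℂ)).eval z‖)
          (Bornology.cobounded ℂ) atTop :=
        Polynomial.tendsto_norm_atTop _ hdeg tendsto_norm_cobounded_atTop
      have hev := ht.eventually_ge_atTop 1
      rw [← comap_norm_atTop, Filter.eventually_comap] at hev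
      obtain ⟨R, hR⟩ := eventually_atTop.mp hev
      exact ⟨1, one_pos, R, fun z hz => hR ‖z‖ hz z rfl⟩
  -- eventual bound c * exp(a/4 x^d) > M
  have hexp : Tendsto (fun x : ℝ => c * Real.exp (a / 4 * x ^ d)) atTop atTop := by
    apply Tendsto.const_mul_atTop hc
    apply Real.tendsto_exp_atTop.comp
    apply Tendsto.const_mul_atTop (by positivity)
    exact tendsto_pow_atTop (by omega)
  obtain ⟨x₁, hx₁⟩ := eventually_atTop.mp (hexp.eventually_gt_atTop M)
  obtain ⟨N, hN⟩ := eventually_atTop.mp hlo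
  refine ⟨θ, hθpos, max 1 (max N (max R x₁)), lt_of_lt_of_le one_pos (le_max_left _ _), ?_⟩
  intro x y hx hy
  have hx1 : 1 ≤ x := le_trans (le_max_left _ _) hx
  have hxN : N ≤ x := le_trans (le_trans (le_max_left _ _) (le_max_right _ _)) hx
  have hxR : R ≤ x := le_trans (le_trans (le_trans (le_max_left _ _) (le_max_right _ _)) (le_max_right _ _)) hx
  have hxx₁ : x₁ ≤ x := le_trans (le_trans (le_trans (le_max_right _ _) (le_max_right _ _)) (le_max_right _ _)) hx
  have hx0 : (0 : ℝ) < x := lt_of_lt_of_le one_pos hx1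
  set z : ℂ := (x : ℂ) + y * Complex.I with hzdef
  have hzx : x ≤ ‖z‖ := by
    have h1 : |z.re| ≤ ‖z‖ := Complex.abs_re_le_norm z
    have h2 : z.re = x := by simp [hzdef]
    rw [h2, abs_of_pos hx0] at h1
    exact h1
  have hPz : c ≤ ‖(P.map (algebraMap ℝ ℂ)).eval z‖ := hR z (le_trans hxR hzx)
  have hQz : a / 4 * x ^ d ≤ ((Q.map (algebraMap ℝ ℂ)).eval z).re := by
    have h1 := key x y hx1 hy
    have h2 := hN x hxN
    have h3 : θ * C * x ^ d ≤ a / 4 * x ^ d :=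
      mul_le_mul_of_nonneg_right hθC (by positivity)
    linarith
  have habs : ‖(P.map (algebraMap ℝ ℂ)).eval z
      * Complex.exp ((Q.map (algebraMap ℝ ℂ)).eval z)‖
      = ‖(P.map (algebraMap ℝ ℂ)).eval z‖ * Real.exp (((Q.map (algebraMap ℝ ℂ)).eval z).re) := by
    rw [norm_mul, Complex.norm_exp]
  rw [habs]
  calc M < c * Real.exp (a / 4 * x ^ d) := hx₁ x hxx₁
    _ ≤ ‖(P.map (algebraMap ℝ ℂ)).eval z‖ * Real.exp (((Q.map (algebraMap ℝ ℂ)).eval z).re) :=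
        mul_le_mul hPz (Real.exp_le_exp.mpr hQz) (Real.exp_pos _).le (norm_nonneg _)
end
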